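/- There exist universal constants α > 0 and β > 0 such that for every integer n ≥ 1, every integer d ≥ 1, every real γ > 0, every probability vector w on [n] (w_j ≥ 0, Σ_j w_j = 1) satisfying F'(w, √d) ≥ α·γ, and every c* ∈ {±1}^n, it holds that P_{r ∼ Unif{±1}^n}[ Σ_{j=1}^n w_j·1[r_j ≠ c*_j] < 1/2 − γ ] ≥ β^{−1}·exp(−β·d). -/

import Mathlib

open Finset

noncomputable section

/-- Indicator of a proposition. -/
def ind (P : Prop) : ℝ := @ite ℝ P (Classical.propDecidable P) 1 0

/-- Given a permutation `σ` sorting the entries of `w` in decreasing order, this is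
`F'(w, t) = Σ_{i=1}^{⌊t²⌋} w_(i) + t·(Σ_{i=⌊t²⌋+1}^{n} w_(i)²)^{1/2}`, where `w_(i)`
denotes the `i`-th largest entry of `w`. -/
def Fprime {n : ℕ} (w : Fin n → ℝ) (t : ℝ) (σ : Equiv.Perm (Fin n)) : ℝ :=
  ∑ i ∈ univ.filter (fun i : Fin n => (i : ℕ) < ⌊t ^ 2⌋₊), w (σ i) +
    t * Real.sqrt (∑ i ∈ univ.filter (fun i : Fin n => ⌊t ^ 2⌋₊ ≤ (i : ℕ)), w (σ i) ^ 2)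

namespace CQRH

lemma ind_pos {P : Prop} (h : P) : ind P = 1 := by simp [ind, h]
lemma ind_neg {P : Prop} (h : ¬ P) : ind P = 0 := by simp [ind, h]
lemma ind_nonneg (P : Prop) : 0 ≤ ind P := by
  by_cases h : P
  · rw [ind_pos h]; norm_num
  · rw [ind_neg h]
lemma ind_mul (P Q : Prop) : ind P * ind Q = ind (P ∧ Q) := by
  by_cases hP : P <;> by_cases hQ : Q <;>
    simp [ind_pos, ind_neg, hP, hQ]
lemma ind_mono {P Q : Prop} (h : P → Q) : ind P ≤ ind Q := by
  by_cases hP : P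
  · rw [ind_pos hP, ind_pos (h hP)]
  · rw [ind_neg hP]; exact ind_nonneg Q
lemma ind_congr {P Q : Prop} (h : P ↔ Q) : ind P = ind Q := by
  by_cases hP : P
  · rw [ind_pos hP, ind_pos (h.1 hP)]
  · rw [ind_neg hP, ind_neg (fun hq => hP (h.2 hq))]
lemma ind_sq (P : Prop) : ind P ^ 2 = ind P := by
  by_cases h : P <;> simp [ind_pos, ind_neg, h]

def χ (b : Bool) : ℝ := if b then 1 else -1

lemma chi_sq (b : Bool) : χ b ^ 2 = 1 := by cases b <;> simp [χ]
lemma chi_cube (b : Bool) : χ b ^ 3 = χ b := by cases b <;> norm_num [χ]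
lemma chi_not (b : Bool) : χ (!b) = - χ b := by cases b <;> simp [χ]
lemma chi_true : χ true = 1 := rfl

variable {n : ℕ}

lemma card_cube : (Fintype.card (Fin n → Bool) : ℝ) = 2 ^ n := by
  simp [Fintype.card_fun]

lemma sum_one_cube : ∑ _s : Fin n → Bool, (1 : ℝ) = 2 ^ n := by
  rw [Finset.sum_const, card_univ, nsmul_eq_mul, mul_one, card_cube]

/-- merging involution -/
def mergeFun (S : Finset (Fin n)) :
    ((Fin n → Bool) × (Fin n → Bool)) → ((Fin n → Bool) × (Fin n → Bool)) :=
  fun p => (fun i => if i ∈ S then p.1 i else p.2 i, fun i => if i ∈ S then p.2 i else p.1 i)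

lemma mergeFun_inv (S : Finset (Fin n)) : Function.Involutive (mergeFun S) := by
  intro p
  unfold mergeFun
  refine Prod.ext ?_ ?_ <;> funext i <;> by_cases h : i ∈ S <;> simp [h]

def mergeEquiv (S : Finset (Fin n)) :
    ((Fin n → Bool) × (Fin n → Bool)) ≃ ((Fin n → Bool) × (Fin n → Bool)) :=
  (mergeFun_inv S).toPerm

lemma indep_sum (S : Finset (Fin n)) (f g : (Fin n → Bool) → ℝ)
    (hf : ∀ s t, (∀ i ∈ S, s i = t i) → f s = f t)
    (hg : ∀ s t, (∀ i ∉ S, s i = t i) → g s = g t) :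
    (∑ s, f s) * (∑ s, g s) = 2 ^ n * ∑ s, f s * g s := by
  have h1 : (∑ s, f s) * (∑ s, g s)
      = ∑ p : (Fin n → Bool) × (Fin n → Bool), f p.1 * g p.2 := by
    rw [Finset.sum_mul_sum, Fintype.sum_prod_type]
  have h2 : ∀ p : (Fin n → Bool) × (Fin n → Bool),
      f ((mergeEquiv S p).1) * g ((mergeEquiv S p).1) = f p.1 * g p.2 := by
    intro p
    have hf' : f ((mergeEquiv S p).1) = f p.1 := by
      apply hf
      intro i hi
      simp [mergeEquiv, Function.Involutive.toPerm, mergeFun, hi]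
    have hg' : g ((mergeEquiv S p).1) = g p.2 := by
      apply hg
      intro i hi
      simp [mergeEquiv, Function.Involutive.toPerm, mergeFun, hi]
    rw [hf', hg']
  have h3 : ∑ p : (Fin n → Bool) × (Fin n → Bool), f p.1 * g p.1
      = ∑ p : (Fin n → Bool) × (Fin n → Bool), f p.1 * g p.2 := by
    rw [← Equiv.sum_comp (mergeEquiv S) (fun p => f p.1 * g p.1)]
    exact Finset.sum_congr rfl (fun p _ => h2 p)
  have h4 : ∑ p : (Fin n → Bool) × (Fin n → Bool), f p.1 * g p.1
      = 2 ^ n * ∑ s, f s * g s := by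
    rw [Fintype.sum_prod_type, Finset.mul_sum]
    refine Finset.sum_congr rfl fun y _ => ?_
    simp [Finset.sum_const, card_univ, Fintype.card_fun, mul_comm, mul_assoc, mul_left_comm]
  rw [h1, ← h3, h4]


lemma indep_event (S : Finset (Fin n)) (P Q : (Fin n → Bool) → Prop)
    (hP : ∀ s t, (∀ i ∈ S, s i = t i) → (P s ↔ P t))
    (hQ : ∀ s t, (∀ i ∉ S, s i = t i) → (Q s ↔ Q t)) :
    (∑ s, ind (P s)) * (∑ s, ind (Q s)) = 2 ^ n * ∑ s, ind (P s ∧ Q s) := by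
  have := indep_sum S (fun s => ind (P s)) (fun s => ind (Q s))
    (fun s t h => ind_congr (hP s t h)) (fun s t h => ind_congr (hQ s t h))
  rw [this]
  congr 1
  exact Finset.sum_congr rfl fun s _ => ind_mul _ _

def flipAll : (Fin n → Bool) ≃ (Fin n → Bool) :=
  Function.Involutive.toPerm (fun s i => !(s i)) (by intro s; funext i; simp)

lemma flipAll_apply (s : Fin n → Bool) (i : Fin n) : (flipAll s) i = !(s i) := rfl

def flipAt (a : Fin n) : (Fin n → Bool) ≃ (Fin n → Bool) :=
  Function.Involutive.toPerm (fun s => Function.update s a (!(s a)))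
    (by
      intro s; funext i
      by_cases h : i = a
      · subst h; simp [Function.update]
      · simp [Function.update, h])

lemma flipAt_apply_self (a : Fin n) (s : Fin n → Bool) : (flipAt a s) a = !(s a) := by
  simp [flipAt, Function.Involutive.toPerm, Function.update]

lemma sum_chi (a : Fin n) : ∑ s : Fin n → Bool, χ (s a) = 0 := by
  have h := Equiv.sum_comp (flipAt a) (fun s => χ (s a))
  have h2 : ∑ s : Fin n → Bool, χ ((flipAt a s) a) = ∑ s : Fin n → Bool, - χ (s a) := by
    refine Finset.sum_congr rfl fun s _ => ?_
    rw [flipAt_apply_self, chi_not]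
  rw [h2] at h
  rw [Finset.sum_neg_distrib] at h
  linarith

lemma sum_ind_coord (a : Fin n) :
    ∑ s : Fin n → Bool, ind (s a = true) = 2 ^ n / 2 := by
  have h := Equiv.sum_comp (flipAt a) (fun s => ind (s a = true))
  have h2 : ∑ s : Fin n → Bool, ind ((flipAt a s) a = true)
      = ∑ s : Fin n → Bool, ind (s a = false) := by
    refine Finset.sum_congr rfl fun s _ => ?_
    refine ind_congr ?_
    rw [flipAt_apply_self]
    cases s a <;> simp
  rw [h2] at h
  have h3 : (∑ s : Fin n → Bool, ind (s a = false)) + ∑ s : Fin n → Bool, ind (s a = true)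
      = 2 ^ n := by
    rw [← Finset.sum_add_distrib, ← sum_one_cube (n := n)]
    refine Finset.sum_congr rfl fun s _ => ?_
    cases hsa : s a <;> simp [ind_pos, ind_neg, hsa]
  rw [h] at h3
  linarith

/-- Probability of all-true on a block. -/
lemma sum_ind_allTrue (B : Finset (Fin n)) :
    ∑ s : Fin n → Bool, ind (∀ i ∈ B, s i = true) = 2 ^ n / 2 ^ B.card := by
  induction B using Finset.induction_on with
  | empty =>
    have h : ∑ s : Fin n → Bool, ind (∀ i ∈ (∅ : Finset (Fin n)), s i = true) = 2 ^ n := by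
      rw [← sum_one_cube (n := n)]
      exact Finset.sum_congr rfl fun s _ => ind_pos (by simp)
    rw [h]; simp
  | insert a B ha ih =>
    have key := indep_event {a} (fun s => s a = true) (fun s => ∀ i ∈ B, s i = true)
      (fun s t h => by rw [h a (mem_singleton_self a)])
      (fun s t h => by
        constructor <;> intro hh i hi
        · rw [← h i (by simp; rintro rfl; exact ha hi)]; exact hh i hi
        · rw [h i (by simp; rintro rfl; exact ha hi)]; exact hh i hi)
    have e1 : ∑ s : Fin n → Bool, ind (∀ i ∈ insert a B, s i = true)
        = ∑ s : Fin n → Bool, ind ((s a = true) ∧ ∀ i ∈ B, s i = true) := by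
      refine Finset.sum_congr rfl fun s _ => ind_congr ?_
      simp [Finset.forall_mem_insert]
    rw [sum_ind_coord, ih] at key
    rw [e1, Finset.card_insert_of_notMem ha]
    have h2n : ((2:ℝ) ^ n) ≠ 0 := by positivity
    apply mul_left_cancel₀ h2n
    rw [← key, pow_succ]
    field_simp

lemma chi_four (b : Bool) : χ b ^ 4 = 1 := by cases b <;> norm_num [χ]

lemma cross_zero (v : Fin n → ℝ) (B : Finset (Fin n)) (a : Fin n) (ha : a ∉ B) (k : ℕ) :
    ∑ s : Fin n → Bool, χ (s a) * (∑ i ∈ B, v i * χ (s i)) ^ k = 0 := by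
  have h := indep_sum {a} (fun s => χ (s a)) (fun s => (∑ i ∈ B, v i * χ (s i)) ^ k)
    (fun s t h => by rw [h a (mem_singleton_self a)])
    (fun s t h => by
      congr 1
      refine Finset.sum_congr rfl fun i hi => ?_
      rw [h i (by simp; rintro rfl; exact ha hi)])
  rw [sum_chi, zero_mul] at h
  have h2n : ((2:ℝ) ^ n) ≠ 0 := by positivity
  rcases mul_eq_zero.1 h.symm with h' | h'
  · exact absurd h' h2n
  · exact h'

lemma moments (v : Fin n → ℝ) (B : Finset (Fin n)) :
    (∑ s : Fin n → Bool, (∑ i ∈ B, v i * χ (s i)) ^ 2 = 2 ^ n * ∑ i ∈ B, v i ^ 2)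
    ∧ (∑ s : Fin n → Bool, (∑ i ∈ B, v i * χ (s i)) ^ 4
        ≤ 3 * 2 ^ n * (∑ i ∈ B, v i ^ 2) ^ 2) := by
  induction B using Finset.induction_on with
  | empty => simp
  | insert a B ha ih =>
    obtain ⟨ih2, ih4⟩ := ih
    have c1 : ∑ s : Fin n → Bool, χ (s a) * (∑ i ∈ B, v i * χ (s i)) ^ 1 = 0 :=
      cross_zero v B a ha 1
    have c3 : ∑ s : Fin n → Bool, χ (s a) * (∑ i ∈ B, v i * χ (s i)) ^ 3 = 0 :=
      cross_zero v B a ha 3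
    have hins : ∀ s : Fin n → Bool,
        (∑ i ∈ insert a B, v i * χ (s i)) = v a * χ (s a) + ∑ i ∈ B, v i * χ (s i) :=
      fun s => Finset.sum_insert ha
    have hvins : (∑ i ∈ insert a B, v i ^ 2) = v a ^ 2 + ∑ i ∈ B, v i ^ 2 :=
      Finset.sum_insert ha
    have h2n : (0:ℝ) < 2 ^ n := by positivity
    have hqnn : (0:ℝ) ≤ ∑ i ∈ B, v i ^ 2 :=
      Finset.sum_nonneg fun i _ => sq_nonneg _
    constructor
    · calc ∑ s : Fin n → Bool, (∑ i ∈ insert a B, v i * χ (s i)) ^ 2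
          = ∑ s : Fin n → Bool, (v a ^ 2 * 1 + (2 * v a) * (χ (s a) * (∑ i ∈ B, v i * χ (s i)) ^ 1)
              + (∑ i ∈ B, v i * χ (s i)) ^ 2) := by
            refine Finset.sum_congr rfl fun s _ => ?_
            rw [hins s]
            have h1 : (χ (s a)) ^ 2 = 1 := chi_sq _
            linear_combination (v a) ^ 2 * h1
        _ = (∑ s : Fin n → Bool, v a ^ 2 * 1)
              + (2 * v a) * (∑ s : Fin n → Bool, χ (s a) * (∑ i ∈ B, v i * χ (s i)) ^ 1)
              + ∑ s : Fin n → Bool, (∑ i ∈ B, v i * χ (s i)) ^ 2 := by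
            rw [Finset.sum_add_distrib, Finset.sum_add_distrib, ← Finset.mul_sum, ← Finset.mul_sum]
        _ = 2 ^ n * ∑ i ∈ insert a B, v i ^ 2 := by
            rw [c1, ih2, ← Finset.mul_sum, sum_one_cube, hvins]
            ring
    · calc ∑ s : Fin n → Bool, (∑ i ∈ insert a B, v i * χ (s i)) ^ 4
          = ∑ s : Fin n → Bool, (v a ^ 4 * 1
              + (4 * v a ^ 3) * (χ (s a) * (∑ i ∈ B, v i * χ (s i)) ^ 1)
              + (6 * v a ^ 2) * (∑ i ∈ B, v i * χ (s i)) ^ 2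
              + (4 * v a) * (χ (s a) * (∑ i ∈ B, v i * χ (s i)) ^ 3)
              + (∑ i ∈ B, v i * χ (s i)) ^ 4) := by
            refine Finset.sum_congr rfl fun s _ => ?_
            rw [hins s]
            have h1 : (χ (s a)) ^ 2 = 1 := chi_sq _
            linear_combination (v a ^ 4 * ((χ (s a)) ^ 2 + 1)
              + 4 * v a ^ 3 * (∑ i ∈ B, v i * χ (s i)) * χ (s a)
              + 6 * v a ^ 2 * (∑ i ∈ B, v i * χ (s i)) ^ 2) * h1
        _ = (∑ s : Fin n → Bool, v a ^ 4 * 1)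
              + (4 * v a ^ 3) * (∑ s : Fin n → Bool, χ (s a) * (∑ i ∈ B, v i * χ (s i)) ^ 1)
              + (6 * v a ^ 2) * (∑ s : Fin n → Bool, (∑ i ∈ B, v i * χ (s i)) ^ 2)
              + (4 * v a) * (∑ s : Fin n → Bool, χ (s a) * (∑ i ∈ B, v i * χ (s i)) ^ 3)
              + ∑ s : Fin n → Bool, (∑ i ∈ B, v i * χ (s i)) ^ 4 := by
            rw [Finset.sum_add_distrib, Finset.sum_add_distrib, Finset.sum_add_distrib,
              Finset.sum_add_distrib, ← Finset.mul_sum, ← Finset.mul_sum, ← Finset.mul_sum,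
              ← Finset.mul_sum]
        _ ≤ 3 * 2 ^ n * (∑ i ∈ insert a B, v i ^ 2) ^ 2 := by
            rw [c1, c3, ih2, ← Finset.mul_sum, sum_one_cube, hvins]
            nlinarith [ih4, mul_nonneg h2n.le (by positivity : (0:ℝ) ≤ v a ^ 4)]


lemma flip_sum_eq (v : Fin n → ℝ) (B : Finset (Fin n)) (t : ℝ) :
    ∑ s : Fin n → Bool, ind (t ≤ - ∑ i ∈ B, v i * χ (s i))
      = ∑ s : Fin n → Bool, ind (t ≤ ∑ i ∈ B, v i * χ (s i)) := by
  rw [← Equiv.sum_comp (flipAll (n := n)) (fun s => ind (t ≤ ∑ i ∈ B, v i * χ (s i)))]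
  refine Finset.sum_congr rfl fun s _ => ind_congr ?_
  have h : ∑ i ∈ B, v i * χ ((flipAll s) i) = - ∑ i ∈ B, v i * χ (s i) := by
    rw [← Finset.sum_neg_distrib]
    refine Finset.sum_congr rfl fun i _ => ?_
    rw [flipAll_apply, chi_not]
    ring
  rw [h]

lemma sym_half (v : Fin n → ℝ) (B : Finset (Fin n)) :
    2 ^ n / 2 ≤ ∑ s : Fin n → Bool, ind ((0:ℝ) ≤ ∑ i ∈ B, v i * χ (s i)) := by
  have key : (∑ s : Fin n → Bool, ind ((0:ℝ) ≤ ∑ i ∈ B, v i * χ (s i)))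
      + ∑ s : Fin n → Bool, ind ((0:ℝ) ≤ - ∑ i ∈ B, v i * χ (s i)) ≥ 2 ^ n := by
    rw [← sum_one_cube (n := n), ← Finset.sum_add_distrib]
    refine Finset.sum_le_sum fun s _ => ?_
    rcases le_total (0:ℝ) (∑ i ∈ B, v i * χ (s i)) with h | h
    · rw [ind_pos h]; linarith [ind_nonneg ((0:ℝ) ≤ - ∑ i ∈ B, v i * χ (s i))]
    · rw [ind_pos (by linarith : (0:ℝ) ≤ - ∑ i ∈ B, v i * χ (s i))]
      linarith [ind_nonneg ((0:ℝ) ≤ ∑ i ∈ B, v i * χ (s i))]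
  rw [flip_sum_eq] at key
  linarith

lemma block_anticoncentration (v : Fin n → ℝ) (B : Finset (Fin n)) (q : ℝ) (hq : 0 < q)
    (hQ : q ^ 2 ≤ ∑ i ∈ B, v i ^ 2) :
    2 ^ n / 24 ≤ ∑ s : Fin n → Bool, ind (q / Real.sqrt 2 ≤ ∑ i ∈ B, v i * χ (s i)) := by
  obtain ⟨m2, m4⟩ := moments v B
  have hQ2pos : (0:ℝ) < ∑ i ∈ B, v i ^ 2 := lt_of_lt_of_le (by positivity) hQ
  have h2n : (0:ℝ) < 2 ^ n := by positivity
  -- Step 1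
  have hstep1 : 2 ^ n * (∑ i ∈ B, v i ^ 2) / 2
      ≤ ∑ s : Fin n → Bool, (∑ i ∈ B, v i * χ (s i)) ^ 2
          * ind ((∑ i ∈ B, v i ^ 2) / 2 ≤ (∑ i ∈ B, v i * χ (s i)) ^ 2) := by
    have hpt : ∀ s : Fin n → Bool, (∑ i ∈ B, v i * χ (s i)) ^ 2
        ≤ (∑ i ∈ B, v i ^ 2) / 2 + (∑ i ∈ B, v i * χ (s i)) ^ 2
            * ind ((∑ i ∈ B, v i ^ 2) / 2 ≤ (∑ i ∈ B, v i * χ (s i)) ^ 2) := by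
      intro s
      by_cases h : (∑ i ∈ B, v i ^ 2) / 2 ≤ (∑ i ∈ B, v i * χ (s i)) ^ 2
      · rw [ind_pos h]; nlinarith
      · rw [ind_neg h]; push_neg at h; nlinarith
    have hsum := Finset.sum_le_sum (fun s (_ : s ∈ (univ : Finset (Fin n → Bool))) => hpt s)
    rw [Finset.sum_add_distrib, m2] at hsum
    have hconst : ∑ _s : Fin n → Bool, (∑ i ∈ B, v i ^ 2) / 2
        = 2 ^ n * ((∑ i ∈ B, v i ^ 2) / 2) := by
      rw [Finset.sum_const, card_univ, nsmul_eq_mul, card_cube]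
    rw [hconst] at hsum
    linarith
  -- Step 2 : Cauchy-Schwarz
  have hCS := Finset.sum_mul_sq_le_sq_mul_sq (univ : Finset (Fin n → Bool))
    (fun s => (∑ i ∈ B, v i * χ (s i)) ^ 2)
    (fun s => ind ((∑ i ∈ B, v i ^ 2) / 2 ≤ (∑ i ∈ B, v i * χ (s i)) ^ 2))
  simp only [ind_sq] at hCS
  have hpow : ∀ s : Fin n → Bool, ((∑ i ∈ B, v i * χ (s i)) ^ 2) ^ 2
      = (∑ i ∈ B, v i * χ (s i)) ^ 4 := fun s => by ring
  rw [Finset.sum_congr rfl (fun s _ => hpow s)] at hCS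
  set N := ∑ s : Fin n → Bool, ind ((∑ i ∈ B, v i ^ 2) / 2 ≤ (∑ i ∈ B, v i * χ (s i)) ^ 2)
    with hN
  have hNnn : 0 ≤ N := Finset.sum_nonneg fun s _ => ind_nonneg _
  have hNlb : 2 ^ n / 12 ≤ N := by
    have hA2 : (2 ^ n * (∑ i ∈ B, v i ^ 2) / 2) ^ 2
        ≤ (∑ s : Fin n → Bool, (∑ i ∈ B, v i * χ (s i)) ^ 2
            * ind ((∑ i ∈ B, v i ^ 2) / 2 ≤ (∑ i ∈ B, v i * χ (s i)) ^ 2)) ^ 2 :=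
      pow_le_pow_left₀ (by positivity) hstep1 2
    have h5 := le_trans hA2 (le_trans hCS (mul_le_mul_of_nonneg_right m4 hNnn))
    nlinarith [h5, pow_pos hQ2pos 2, h2n, mul_pos h2n (pow_pos hQ2pos 2)]
  -- Step 3 : split by sign
  have ht : q / Real.sqrt 2 ≤ Real.sqrt ((∑ i ∈ B, v i ^ 2) / 2) := by
    rw [Real.sqrt_div hQ2pos.le]
    have h1 : q ≤ Real.sqrt (∑ i ∈ B, v i ^ 2) := by
      calc q = Real.sqrt (q ^ 2) := (Real.sqrt_sq hq.le).symm
        _ ≤ _ := Real.sqrt_le_sqrt hQ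
    have h2 : (0:ℝ) < Real.sqrt 2 := Real.sqrt_pos.2 (by norm_num)
    exact (div_le_div_iff_of_pos_right h2).mpr h1
  have hsplit : N ≤ (∑ s : Fin n → Bool, ind (q / Real.sqrt 2 ≤ ∑ i ∈ B, v i * χ (s i)))
      + ∑ s : Fin n → Bool, ind (q / Real.sqrt 2 ≤ - ∑ i ∈ B, v i * χ (s i)) := by
    rw [hN, ← Finset.sum_add_distrib]
    refine Finset.sum_le_sum fun s _ => ?_
    by_cases h : (∑ i ∈ B, v i ^ 2) / 2 ≤ (∑ i ∈ B, v i * χ (s i)) ^ 2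
    · rw [ind_pos h]
      have habs : Real.sqrt ((∑ i ∈ B, v i ^ 2) / 2) ≤ |∑ i ∈ B, v i * χ (s i)| := by
        calc Real.sqrt ((∑ i ∈ B, v i ^ 2) / 2) ≤ Real.sqrt ((∑ i ∈ B, v i * χ (s i)) ^ 2) :=
              Real.sqrt_le_sqrt h
          _ = |∑ i ∈ B, v i * χ (s i)| := Real.sqrt_sq_eq_abs _
      rcases abs_cases (∑ i ∈ B, v i * χ (s i)) with ⟨he, _⟩ | ⟨he, _⟩
      · rw [ind_pos (by rw [he] at habs; linarith [ht] : q / Real.sqrt 2 ≤ ∑ i ∈ B, v i * χ (s i))]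
        linarith [ind_nonneg (q / Real.sqrt 2 ≤ - ∑ i ∈ B, v i * χ (s i))]
      · rw [ind_pos (by rw [he] at habs; linarith [ht] : q / Real.sqrt 2 ≤ - ∑ i ∈ B, v i * χ (s i))]
        linarith [ind_nonneg (q / Real.sqrt 2 ≤ ∑ i ∈ B, v i * χ (s i))]
    · rw [ind_neg h]
      have := ind_nonneg (q / Real.sqrt 2 ≤ ∑ i ∈ B, v i * χ (s i))
      have := ind_nonneg (q / Real.sqrt 2 ≤ - ∑ i ∈ B, v i * χ (s i))
      linarith
  rw [flip_sum_eq] at hsplit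
  linarith


lemma peel (v : Fin n → ℝ) (hv : ∀ i, 0 ≤ v i) (q : ℝ) (hq : 0 < q) :
    ∀ m : ℕ, ∀ S : Finset (Fin n), (∀ i ∈ S, v i ≤ q) →
      2 * (m : ℝ) * q ^ 2 ≤ ∑ i ∈ S, v i ^ 2 →
      2 ^ n / (2 * 24 ^ m) ≤ ∑ s : Fin n → Bool,
        ind ((m : ℝ) * (q / Real.sqrt 2) ≤ ∑ i ∈ S, v i * χ (s i)) := by
  intro m
  induction m with
  | zero =>
    intro S hS hsum
    have h : ∑ s : Fin n → Bool, ind (((0:ℕ) : ℝ) * (q / Real.sqrt 2) ≤ ∑ i ∈ S, v i * χ (s i))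
        = ∑ s : Fin n → Bool, ind ((0:ℝ) ≤ ∑ i ∈ S, v i * χ (s i)) := by
      refine Finset.sum_congr rfl fun s _ => ind_congr ?_
      norm_num
    rw [h]
    have := sym_half v S
    calc (2:ℝ) ^ n / (2 * 24 ^ 0) = 2 ^ n / 2 := by norm_num
      _ ≤ _ := this
  | succ m ih =>
    intro S hS hsum
    have h2n : (0:ℝ) < 2 ^ n := by positivity
    -- find a minimal block B
    have hSF : S ∈ (S.powerset).filter (fun B => q ^ 2 ≤ ∑ i ∈ B, v i ^ 2) := by
      refine Finset.mem_filter.2 ⟨Finset.mem_powerset_self S, ?_⟩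
      have : (1:ℝ) ≤ (m:ℝ) + 1 := by
        have h0 : (0:ℝ) ≤ (m:ℝ) := Nat.cast_nonneg m
        linarith
      push_cast at hsum
      nlinarith
    obtain ⟨B, hBF, hBmin⟩ := Finset.exists_min_image _ Finset.card ⟨S, hSF⟩
    obtain ⟨hBS', hBlb⟩ := Finset.mem_filter.1 hBF
    have hBS : B ⊆ S := Finset.mem_powerset.1 hBS'
    -- B is nonempty
    have hBne : B.Nonempty := by
      rcases Finset.eq_empty_or_nonempty B with rfl | h
      · simp at hBlb; nlinarith
      · exact h
    obtain ⟨a, ha⟩ := hBne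
    -- upper bound on the block mass
    have hBub : ∑ i ∈ B, v i ^ 2 ≤ 2 * q ^ 2 := by
      have herase : ¬ (q ^ 2 ≤ ∑ i ∈ B.erase a, v i ^ 2) := by
        intro hcon
        have hmem : B.erase a ∈ (S.powerset).filter (fun B => q ^ 2 ≤ ∑ i ∈ B, v i ^ 2) :=
          Finset.mem_filter.2 ⟨Finset.mem_powerset.2 ((Finset.erase_subset a B).trans hBS), hcon⟩
        have := hBmin _ hmem
        have hlt : (B.erase a).card < B.card := Finset.card_erase_lt_of_mem ha
        omega
      push_neg at herase
      have hsum' : ∑ i ∈ B.erase a, v i ^ 2 + v a ^ 2 = ∑ i ∈ B, v i ^ 2 :=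
        Finset.sum_erase_add B _ ha
      have hva : v a ^ 2 ≤ q ^ 2 := by
        have h1 := hv a
        have h2 := hS a (hBS ha)
        nlinarith
      linarith
    -- tail bound
    have htail : 2 * (m : ℝ) * q ^ 2 ≤ ∑ i ∈ S \ B, v i ^ 2 := by
      have := Finset.sum_sdiff (f := fun i => v i ^ 2) hBS
      push_cast at hsum ⊢
      linarith
    have hQlb := ih (S \ B) (fun i hi => hS i (Finset.mem_sdiff.1 hi).1) htail
    have hPlb := block_anticoncentration v B q hq hBlb
    -- independence
    have key := indep_event B (fun s => q / Real.sqrt 2 ≤ ∑ i ∈ B, v i * χ (s i))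
      (fun s => (m : ℝ) * (q / Real.sqrt 2) ≤ ∑ i ∈ S \ B, v i * χ (s i))
      (fun s t h => by
        have : ∑ i ∈ B, v i * χ (s i) = ∑ i ∈ B, v i * χ (t i) :=
          Finset.sum_congr rfl fun i hi => by rw [h i hi]
        rw [this])
      (fun s t h => by
        have : ∑ i ∈ S \ B, v i * χ (s i) = ∑ i ∈ S \ B, v i * χ (t i) :=
          Finset.sum_congr rfl fun i hi => by rw [h i (Finset.mem_sdiff.1 hi).2]
        rw [this])
    have hPnn : (0:ℝ) ≤ ∑ s : Fin n → Bool, ind (q / Real.sqrt 2 ≤ ∑ i ∈ B, v i * χ (s i)) :=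
      Finset.sum_nonneg fun s _ => ind_nonneg _
    have hprod : (2 ^ n / 24) * (2 ^ n / (2 * 24 ^ m))
        ≤ (∑ s : Fin n → Bool, ind (q / Real.sqrt 2 ≤ ∑ i ∈ B, v i * χ (s i)))
          * ∑ s : Fin n → Bool, ind ((m : ℝ) * (q / Real.sqrt 2) ≤ ∑ i ∈ S \ B, v i * χ (s i)) :=
      mul_le_mul hPlb hQlb (by positivity) hPnn
    rw [key] at hprod
    have hmid : 2 ^ n / (2 * 24 ^ (m + 1))
        ≤ ∑ s : Fin n → Bool, ind ((q / Real.sqrt 2 ≤ ∑ i ∈ B, v i * χ (s i))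
            ∧ (m : ℝ) * (q / Real.sqrt 2) ≤ ∑ i ∈ S \ B, v i * χ (s i)) := by
      have heq : (2:ℝ) ^ n / 24 * (2 ^ n / (2 * 24 ^ m)) = 2 ^ n * (2 ^ n / (2 * 24 ^ (m + 1))) := by
        rw [pow_succ]
        field_simp
      rw [heq] at hprod
      exact le_of_mul_le_mul_left hprod h2n
    refine le_trans hmid (Finset.sum_le_sum fun s _ => ind_mono ?_)
    rintro ⟨h1, h2⟩
    have hsplit : ∑ i ∈ S \ B, v i * χ (s i) + ∑ i ∈ B, v i * χ (s i)
        = ∑ i ∈ S, v i * χ (s i) := Finset.sum_sdiff hBS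
    push_cast
    nlinarith [Real.sqrt_nonneg 2, div_nonneg hq.le (Real.sqrt_nonneg 2)]


lemma numeric (d : ℕ) : (16:ℝ)⁻¹ * Real.exp (-(16 * d)) ≤ 1 / (2 * 663552 ^ d) := by
  have he : (663552:ℝ) ≤ Real.exp 16 := by
    have h1 : (2.7182818283:ℝ) < Real.exp 1 := Real.exp_one_gt_d9
    have h2 : Real.exp 16 = (Real.exp 1) ^ (16:ℕ) := by
      rw [← Real.exp_nat_mul]; norm_num
    rw [h2]
    calc (663552:ℝ) ≤ 2.7182818283 ^ (16:ℕ) := by norm_num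
      _ ≤ (Real.exp 1) ^ (16:ℕ) := pow_le_pow_left₀ (by norm_num) h1.le 16
  have hexp : Real.exp (-(16 * (d:ℝ))) = ((Real.exp 16)⁻¹) ^ d := by
    rw [show -(16 * (d:ℝ)) = (d:ℕ) * (-16) by push_cast; ring, Real.exp_nat_mul,
      Real.exp_neg]
  rw [hexp]
  have hpos : (0:ℝ) < Real.exp 16 := Real.exp_pos 16
  have hinv : (Real.exp 16)⁻¹ ≤ (663552:ℝ)⁻¹ := by
    apply inv_anti₀ (by norm_num) he
  have hpow : ((Real.exp 16)⁻¹) ^ d ≤ ((663552:ℝ)⁻¹) ^ d :=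
    pow_le_pow_left₀ (by positivity) hinv d
  have h663 : (0:ℝ) < (663552:ℝ) ^ d := by positivity
  calc (16:ℝ)⁻¹ * ((Real.exp 16)⁻¹) ^ d ≤ (16:ℝ)⁻¹ * ((663552:ℝ)⁻¹) ^ d := by
        exact mul_le_mul_of_nonneg_left hpow (by norm_num)
    _ ≤ 1 / (2 * 663552 ^ d) := by
        rw [inv_pow, ← one_div, ← one_div, div_mul_div_comm,
          div_le_div_iff₀ (by positivity) (by positivity)]
        nlinarith [h663]


end CQRH

set_option maxHeartbeats 2000000 in
open CQRH in
/-- **Concentrated queries are answered by a uniformly random hypothesis.**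
There are universal constants `α, β > 0` such that for all `n, d ≥ 1`, every `γ > 0`,
every probability vector `w` on `[n]` (with `σ` a permutation arranging its entries in
decreasing order) satisfying `F'(w, √d) ≥ αγ`, and every `c* ∈ {±1}ⁿ`, a uniformly
random `r ∈ {±1}ⁿ` satisfies `Σⱼ wⱼ·1[rⱼ ≠ c*ⱼ] < 1/2 - γ` with probability at least
`β⁻¹·exp(-βd)`. -/
theorem concentrated_query_random_hypothesis :
    ∃ α β : ℝ, 0 < α ∧ 0 < β ∧
      ∀ n d : ℕ, 1 ≤ n → 1 ≤ d →
      ∀ γ : ℝ, 0 < γ →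
      ∀ w : Fin n → ℝ, (∀ j, 0 ≤ w j) → ∑ j, w j = 1 →
      ∀ σ : Equiv.Perm (Fin n), (∀ i j : Fin n, i ≤ j → w (σ j) ≤ w (σ i)) →
        α * γ ≤ Fprime w (Real.sqrt d) σ →
      ∀ cstar : Fin n → Bool,
        (((univ.filter fun r : Fin n → Bool =>
              ∑ j, w j * ind (r j ≠ cstar j) < 1 / 2 - γ).card : ℝ) / 2 ^ n)
          ≥ β⁻¹ * Real.exp (-(β * d)) := by
  refine ⟨16, 16, by norm_num, by norm_num, ?_⟩
  intro n d hn hd γ hγ w hw0 hw1 σ hsort hF cstar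
  classical
  set v : Fin n → ℝ := fun i => w (σ i) with hv
  have hvnn : ∀ i, 0 ≤ v i := fun i => hw0 (σ i)
  have h2n : (0:ℝ) < 2 ^ n := by positivity
  set Hd : Finset (Fin n) := univ.filter (fun i : Fin n => (i:ℕ) < d) with hHd
  set Tl : Finset (Fin n) := univ.filter (fun i : Fin n => d ≤ (i:ℕ)) with hTl
  -- rewrite Fprime
  have hfloor : ⌊(Real.sqrt d) ^ 2⌋₊ = d := by
    rw [Real.sq_sqrt (Nat.cast_nonneg d)]
    exact Nat.floor_natCast d
  have hFp : Fprime w (Real.sqrt d) σ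
      = ∑ i ∈ Hd, v i + Real.sqrt d * Real.sqrt (∑ i ∈ Tl, v i ^ 2) := by
    simp only [Fprime, hfloor, hHd, hTl, hv]
  rw [hFp] at hF
  -- partition of the full sum
  have hHdTl : ∀ s : Fin n → Bool,
      (∑ i ∈ Hd, v i * χ (s i)) + (∑ i ∈ Tl, v i * χ (s i)) = ∑ i, v i * χ (s i) := by
    intro s
    rw [← Finset.sum_filter_add_sum_filter_not univ (fun i : Fin n => (i:ℕ) < d)
      (fun i => v i * χ (s i))]
    congr 1
    apply Finset.sum_congr _ (fun _ _ => rfl)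
    rw [hTl]
    ext i
    simp [not_lt]
  have hHdcard : Hd.card ≤ d := by
    have himg : Hd.image (fun i : Fin n => (i:ℕ)) ⊆ Finset.range d := by
      intro x hx
      simp only [Finset.mem_image] at hx
      obtain ⟨i, hi, rfl⟩ := hx
      exact Finset.mem_range.2 (Finset.mem_filter.1 hi).2
    calc Hd.card = (Hd.image (fun i : Fin n => (i:ℕ))).card :=
          (Finset.card_image_of_injective _ Fin.val_injective).symm
      _ ≤ (Finset.range d).card := Finset.card_le_card himg
      _ = d := Finset.card_range d
  -- the key lower bound
  have key : 2 ^ n / (2 * 663552 ^ d)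
      ≤ ∑ s : Fin n → Bool, ind (2 * γ < ∑ i, v i * χ (s i)) := by
    have hQ2nn : (0:ℝ) ≤ ∑ i ∈ Tl, v i ^ 2 := Finset.sum_nonneg fun i _ => sq_nonneg _
    have hQnn : (0:ℝ) ≤ ∑ s : Fin n → Bool, ind ((0:ℝ) ≤ ∑ i ∈ Tl, v i * χ (s i)) :=
      Finset.sum_nonneg fun s _ => ind_nonneg _
    have hdep1 : ∀ s t : Fin n → Bool, (∀ i ∈ Hd, s i = t i) →
        ((∀ i ∈ Hd, s i = true) ↔ (∀ i ∈ Hd, t i = true)) := by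
      intro s t h
      constructor <;> intro hh i hi
      · rw [← h i hi]; exact hh i hi
      · rw [h i hi]; exact hh i hi
    have hdep2 : ∀ (c : ℝ) (s t : Fin n → Bool), (∀ i ∉ Hd, s i = t i) →
        ((c ≤ ∑ i ∈ Tl, v i * χ (s i)) ↔ (c ≤ ∑ i ∈ Tl, v i * χ (t i))) := by
      intro c s t h
      have : ∑ i ∈ Tl, v i * χ (s i) = ∑ i ∈ Tl, v i * χ (t i) := by
        refine Finset.sum_congr rfl fun i hi => ?_
        rw [h i (by
          intro hmem
          have h1 := Finset.mem_filter.1 hi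
          have h2 := Finset.mem_filter.1 hmem
          omega)]
      rw [this]
    rcases le_or_gt (4 * γ) (∑ i ∈ Hd, v i) with hH | hH
    · -- Case A : heavy head
      have hind := indep_event Hd (fun s => ∀ i ∈ Hd, s i = true)
        (fun s => (0:ℝ) ≤ ∑ i ∈ Tl, v i * χ (s i)) hdep1 (hdep2 0)
      rw [sum_ind_allTrue] at hind
      have hsym := sym_half v Tl
      have hstep : (2:ℝ) ^ n / 2 ^ Hd.card * (2 ^ n / 2)
          ≤ 2 ^ n * ∑ s : Fin n → Bool,
              ind ((∀ i ∈ Hd, s i = true) ∧ (0:ℝ) ≤ ∑ i ∈ Tl, v i * χ (s i)) := by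
        refine le_trans (mul_le_mul_of_nonneg_left hsym (by positivity)) (le_of_eq hind)
      have heq : (2:ℝ) ^ n / 2 ^ Hd.card * (2 ^ n / 2)
          = 2 ^ n * (2 ^ n / (2 * 2 ^ Hd.card)) := by
        field_simp
      rw [heq] at hstep
      have hS := le_of_mul_le_mul_left hstep h2n
      have hmono : ∑ s : Fin n → Bool,
            ind ((∀ i ∈ Hd, s i = true) ∧ (0:ℝ) ≤ ∑ i ∈ Tl, v i * χ (s i))
          ≤ ∑ s : Fin n → Bool, ind (2 * γ < ∑ i, v i * χ (s i)) := by
        refine Finset.sum_le_sum fun s _ => ind_mono ?_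
        rintro ⟨h1, h2⟩
        have he : ∑ i ∈ Hd, v i * χ (s i) = ∑ i ∈ Hd, v i :=
          Finset.sum_congr rfl fun i hi => by rw [h1 i hi, chi_true, mul_one]
        have := hHdTl s
        linarith
      refine le_trans ?_ (le_trans hS hmono)
      have hcle : (2:ℝ) ^ Hd.card ≤ 663552 ^ d := by
        calc (2:ℝ) ^ Hd.card ≤ 2 ^ d := by
              exact pow_le_pow_right₀ one_le_two hHdcard
          _ ≤ 663552 ^ d := by
              exact pow_le_pow_left₀ (by norm_num) (by norm_num) d
      apply div_le_div_of_nonneg_left h2n.le (by positivity)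
      nlinarith [hcle]
    · -- Case B : spread tail
      have hd0 : (0:ℝ) < d := by
        have : (1:ℝ) ≤ d := by exact_mod_cast hd
        linarith
      have hTlne : Tl.Nonempty := by
        by_contra hcon
        rw [Finset.not_nonempty_iff_eq_empty] at hcon
        rw [hcon] at hF
        simp [Real.sqrt_zero] at hF
        nlinarith
      obtain ⟨i0, hi0⟩ := hTlne
      have hdn : d < n := by
        have h1 := (Finset.mem_filter.1 hi0).2
        have h2 := i0.isLt
        omega
      have hHdcard_eq : Hd.card = d := by
        apply Finset.card_eq_of_bijective (fun i hi => (⟨i, lt_trans hi hdn⟩ : Fin n))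
        · intro a ha
          exact ⟨a.val, (Finset.mem_filter.1 ha).2, by simp⟩
        · intro i hi
          exact Finset.mem_filter.2 ⟨Finset.mem_univ _, by simpa⟩
        · intro i j hi hj hij
          simpa using congrArg Fin.val hij
      have hvle : ∀ i ∈ Tl, v i ≤ 4 * γ / d := by
        intro i hi
        have hdi : d ≤ (i:ℕ) := (Finset.mem_filter.1 hi).2
        have hsumlb : (d:ℝ) * v i ≤ ∑ j ∈ Hd, v j := by
          calc (d:ℝ) * v i = ∑ _j ∈ Hd, v i := by
                rw [Finset.sum_const, hHdcard_eq, nsmul_eq_mul]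
            _ ≤ ∑ j ∈ Hd, v j := by
                refine Finset.sum_le_sum fun j hj => ?_
                have hjd : (j:ℕ) < d := (Finset.mem_filter.1 hj).2
                exact hsort j i (by rw [Fin.le_def]; omega)
        rw [le_div_iff₀ hd0]
        nlinarith
      have hsqrtlb : 12 * γ ≤ Real.sqrt d * Real.sqrt (∑ i ∈ Tl, v i ^ 2) := by linarith
      have hQlb : 144 * γ ^ 2 ≤ (d:ℝ) * ∑ i ∈ Tl, v i ^ 2 := by
        have h2 := pow_le_pow_left₀ (by positivity : (0:ℝ) ≤ 12 * γ) hsqrtlb 2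
        rw [mul_pow, mul_pow, Real.sq_sqrt (Nat.cast_nonneg d), Real.sq_sqrt hQ2nn] at h2
        nlinarith
      have hmass : 2 * ((4 * d : ℕ):ℝ) * (4 * γ / d) ^ 2 ≤ ∑ i ∈ Tl, v i ^ 2 := by
        have heq : 2 * ((4 * d : ℕ):ℝ) * (4 * γ / d) ^ 2 = 128 * γ ^ 2 / d := by
          push_cast
          field_simp
          ring
        rw [heq, div_le_iff₀ hd0]
        nlinarith [sq_nonneg γ]
      have hpeel := peel v hvnn (4 * γ / d) (by positivity) (4 * d) Tl hvle hmass
      have hind := indep_event Hd (fun s => ∀ i ∈ Hd, s i = true)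
        (fun s => ((4 * d : ℕ):ℝ) * (4 * γ / d / Real.sqrt 2) ≤ ∑ i ∈ Tl, v i * χ (s i))
        hdep1 (hdep2 _)
      rw [sum_ind_allTrue, hHdcard_eq] at hind
      have hQnn' : (0:ℝ) ≤ ∑ s : Fin n → Bool,
          ind (((4 * d : ℕ):ℝ) * (4 * γ / d / Real.sqrt 2) ≤ ∑ i ∈ Tl, v i * χ (s i)) :=
        Finset.sum_nonneg fun s _ => ind_nonneg _
      have hstep : (2:ℝ) ^ n / 2 ^ d * (2 ^ n / (2 * 24 ^ (4 * d)))
          ≤ 2 ^ n * ∑ s : Fin n → Bool,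
              ind ((∀ i ∈ Hd, s i = true)
                ∧ ((4 * d : ℕ):ℝ) * (4 * γ / d / Real.sqrt 2) ≤ ∑ i ∈ Tl, v i * χ (s i)) := by
        refine le_trans (mul_le_mul_of_nonneg_left hpeel (by positivity)) (le_of_eq hind)
      have heq2 : (2:ℝ) ^ n / 2 ^ d * (2 ^ n / (2 * 24 ^ (4 * d)))
          = 2 ^ n * (2 ^ n / (2 * 663552 ^ d)) := by
        have h24 : (24:ℝ) ^ (4 * d) = 331776 ^ d := by
          rw [pow_mul]
          norm_num
        rw [h24]
        have h66 : (663552:ℝ) ^ d = 2 ^ d * 331776 ^ d := by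
          rw [← mul_pow]
          norm_num
        rw [h66]
        field_simp
      rw [heq2] at hstep
      have hS := le_of_mul_le_mul_left hstep h2n
      refine le_trans hS (Finset.sum_le_sum fun s _ => ind_mono ?_)
      rintro ⟨h1, h2⟩
      have he : ∑ i ∈ Hd, v i * χ (s i) = ∑ i ∈ Hd, v i :=
        Finset.sum_congr rfl fun i hi => by rw [h1 i hi, chi_true, mul_one]
      have hHnn : (0:ℝ) ≤ ∑ i ∈ Hd, v i := Finset.sum_nonneg fun i _ => hvnn i
      have hs2 : (0:ℝ) < Real.sqrt 2 := Real.sqrt_pos.2 (by norm_num)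
      have hs2le : Real.sqrt 2 ≤ 2 := by
        nlinarith [Real.sq_sqrt (by norm_num : (0:ℝ) ≤ 2), Real.sqrt_nonneg 2]
      have hthr : 8 * γ ≤ ((4 * d : ℕ):ℝ) * (4 * γ / d / Real.sqrt 2) := by
        have h1' : ((4 * d : ℕ):ℝ) * (4 * γ / d / Real.sqrt 2) = 16 * γ / Real.sqrt 2 := by
          push_cast
          field_simp
          ring
        rw [h1', le_div_iff₀ hs2]
        nlinarith
      have := hHdTl s
      linarith
  -- conversion of the goal
  have hcard : ((univ.filter fun r : Fin n → Bool =>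
        ∑ j, w j * ind (r j ≠ cstar j) < 1 / 2 - γ).card : ℝ)
      = ∑ r : Fin n → Bool, ind (∑ j, w j * ind (r j ≠ cstar j) < 1 / 2 - γ) := by
    rw [Finset.card_filter]
    push_cast
    refine Finset.sum_congr rfl fun r _ => ?_
    by_cases h : ∑ j, w j * ind (r j ≠ cstar j) < 1 / 2 - γ
    · rw [if_pos h, ind_pos h]
    · rw [if_neg h, ind_neg h]
  have hψinv : Function.Involutive (fun (r : Fin n → Bool) => fun j => (r j == cstar j)) := by
    intro r; funext j; cases hr : r j <;> cases hc : cstar j <;> simp [hr, hc]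
  set ψ : Equiv.Perm (Fin n → Bool) := Function.Involutive.toPerm _ hψinv with hψdef
  have h2 : ∑ r : Fin n → Bool, ind (∑ j, w j * ind (r j ≠ cstar j) < 1 / 2 - γ)
      = ∑ s : Fin n → Bool, ind (2 * γ < ∑ j, w j * χ (s j)) := by
    rw [← Equiv.sum_comp ψ
      (fun r => ind (∑ j, w j * ind (r j ≠ cstar j) < 1 / 2 - γ))]
    refine Finset.sum_congr rfl fun s _ => ind_congr ?_
    have hterm : ∀ j, w j * ind ((ψ s) j ≠ cstar j)
        = w j / 2 - (w j * χ (s j)) / 2 := by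
      intro j
      have hval : (ψ s) j = (s j == cstar j) := rfl
      rw [hval]
      cases hs : s j <;> cases hc : cstar j <;>
        simp [ind, χ] <;> ring
    rw [Finset.sum_congr rfl (fun j _ => hterm j), Finset.sum_sub_distrib,
      ← Finset.sum_div, ← Finset.sum_div, hw1]
    constructor <;> intro h <;> linarith
  have h3 : ∑ s : Fin n → Bool, ind (2 * γ < ∑ j, w j * χ (s j))
      = ∑ s : Fin n → Bool, ind (2 * γ < ∑ i, v i * χ (s i)) := by
    rw [← Equiv.sum_comp (Equiv.arrowCongr σ (Equiv.refl Bool))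
      (fun s => ind (2 * γ < ∑ j, w j * χ (s j)))]
    refine Finset.sum_congr rfl fun s _ => ind_congr ?_
    have hsum : ∑ j, w j * χ ((Equiv.arrowCongr σ (Equiv.refl Bool) s) j)
        = ∑ i, v i * χ (s i) := by
      rw [← Equiv.sum_comp σ (fun j => w j * χ ((Equiv.arrowCongr σ (Equiv.refl Bool) s) j))]
      refine Finset.sum_congr rfl fun i _ => ?_
      simp [Equiv.arrowCongr, hv]
    rw [hsum]
  rw [ge_iff_le, hcard, h2, h3]
  calc (16:ℝ)⁻¹ * Real.exp (-(16 * d)) ≤ 1 / (2 * 663552 ^ d) := numeric d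
    _ ≤ (∑ s : Fin n → Bool, ind (2 * γ < ∑ i, v i * χ (s i))) / 2 ^ n := by
      rw [le_div_iff₀ h2n]
      have heq : (1:ℝ) / (2 * 663552 ^ d) * 2 ^ n = 2 ^ n / (2 * 663552 ^ d) := by ring
      rw [heq]
      exact key


end
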